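/- arXiv:2109.12604 — 2 statements merged into one kernel-verified Lean document; each statement's English description precedes it below -/
import Mathlib

section
/- Let (λ(t), x(t), v(t)) be a continuously differentiable solution on [0,∞) of the accelerated primal-dual flow: θ(t)λ'(t) = A v(t) − b, x'(t) = v(t) − x(t), γ(t)v'(t) = μ_β(x(t) − v(t)) − ∇_x L_β(x(t), λ(t)), where θ(t) = θ₀ e^{−t} and γ(t) = μ_β + (γ₀ − μ_β)e^{−t} with θ₀, γ₀ > 0. Define E(t) = L_β(x(t), λ*) − L_β(x*, λ(t)) + (γ(t)/2)‖v(t) − x*‖² + (θ(t)/2)‖λ(t) − λ*‖². Then for all t ≥ 0, E(t) + (μ_β/2)∫₀ᵗ e^{s−t}‖x'(s)‖² ds ≤ e^{−t} E(0). -/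
open scoped RealInnerProductSpace

set_option maxHeartbeats 1000000

/-- Derivative of the squared norm along a differentiable curve. -/
lemma hasDerivAt_norm_sq_aux {E : Type*} [NormedAddCommGroup E] [InnerProductSpace ℝ E]
    {u : ℝ → E} {u' : E} {t : ℝ} (h : HasDerivAt u u' t) :
    HasDerivAt (fun s => ‖u s‖ ^ 2) (2 * ⟪u t, u'⟫) t := by
  have h2 := HasDerivAt.inner ℝ h h
  have heq : (fun s => ‖u s‖ ^ 2) = fun s => ⟪u s, u s⟫ := by
    funext s
    rw [real_inner_self_eq_norm_sq]
  have hval : (2:ℝ) * ⟪u t, u'⟫ = ⟪u t, u'⟫ + ⟪u', u t⟫ := by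
    rw [real_inner_comm u' (u t)]; ring
  rw [heq, hval]; exact h2

/-- The smallest singular value of a linear map between Euclidean spaces. -/
noncomputable def sigmaMin {n m : ℕ}
    (A : EuclideanSpace ℝ (Fin n) →L[ℝ] EuclideanSpace ℝ (Fin m)) : ℝ :=
  sInf {c : ℝ | ∃ x : EuclideanSpace ℝ (Fin n), ‖x‖ = 1 ∧ ‖A x‖ = c}

lemma sigmaMin_nonneg {n m : ℕ}
    (A : EuclideanSpace ℝ (Fin n) →L[ℝ] EuclideanSpace ℝ (Fin m)) : 0 ≤ sigmaMin A := by
  unfold sigmaMin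
  by_cases hS : {c : ℝ | ∃ x : EuclideanSpace ℝ (Fin n), ‖x‖ = 1 ∧ ‖A x‖ = c}.Nonempty
  · exact le_csInf hS (by rintro c ⟨u, -, rfl⟩; positivity)
  · rw [Set.not_nonempty_iff_eq_empty.mp hS, Real.sInf_empty]

lemma sigmaMin_mul_le {n m : ℕ}
    (A : EuclideanSpace ℝ (Fin n) →L[ℝ] EuclideanSpace ℝ (Fin m))
    (u : EuclideanSpace ℝ (Fin n)) : sigmaMin A * ‖u‖ ≤ ‖A u‖ := by
  rcases eq_or_ne u 0 with rfl | hu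
  · simp
  · have hn : ‖u‖ ≠ 0 := norm_ne_zero_iff.mpr hu
    have hn' : (0:ℝ) < ‖u‖ := norm_pos_iff.mpr hu
    have hmem : ‖A (‖u‖⁻¹ • u)‖ ∈
        {c : ℝ | ∃ x : EuclideanSpace ℝ (Fin n), ‖x‖ = 1 ∧ ‖A x‖ = c} := by
      refine ⟨‖u‖⁻¹ • u, ?_, rfl⟩
      rw [norm_smul, norm_inv, norm_norm, inv_mul_cancel₀ hn]
    have hbdd : BddBelow {c : ℝ | ∃ x : EuclideanSpace ℝ (Fin n), ‖x‖ = 1 ∧ ‖A x‖ = c} := by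
      refine ⟨0, ?_⟩; rintro c ⟨w, -, rfl⟩; positivity
    have h1 : sigmaMin A ≤ ‖A (‖u‖⁻¹ • u)‖ := csInf_le hbdd hmem
    have h2 : ‖A (‖u‖⁻¹ • u)‖ = ‖u‖⁻¹ * ‖A u‖ := by
      rw [map_smul, norm_smul, norm_inv, norm_norm]
    rw [h2] at h1
    calc sigmaMin A * ‖u‖ ≤ (‖u‖⁻¹ * ‖A u‖) * ‖u‖ :=
          mul_le_mul_of_nonneg_right h1 (norm_nonneg u)
      _ = ‖A u‖ := by field_simp

lemma sigmaMin_sq_le {n m : ℕ}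
    (A : EuclideanSpace ℝ (Fin n) →L[ℝ] EuclideanSpace ℝ (Fin m))
    (u : EuclideanSpace ℝ (Fin n)) : sigmaMin A ^ 2 * ‖u‖ ^ 2 ≤ ‖A u‖ ^ 2 := by
  have h1 := sigmaMin_mul_le A u
  have h2 := sigmaMin_nonneg A
  nlinarith [norm_nonneg u, norm_nonneg (A u), mul_nonneg h2 (norm_nonneg u)]

/-- Lemma 2.1 (i): exponential decay inequality for the Lyapunov function of the
accelerated primal-dual flow. -/
theorem apd_flow_exponential_decay {n m : ℕ}
    (f : EuclideanSpace ℝ (Fin n) → ℝ)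
    (gradf : EuclideanSpace ℝ (Fin n) → EuclideanSpace ℝ (Fin n))
    (A : EuclideanSpace ℝ (Fin n) →L[ℝ] EuclideanSpace ℝ (Fin m))
    (b : EuclideanSpace ℝ (Fin m))
    (μ L β θ₀ γ₀ μβ : ℝ)
    (hμ : 0 ≤ μ) (hμL : μ ≤ L) (hβ : 0 ≤ β) (hθ₀ : 0 < θ₀) (hγ₀ : 0 < γ₀)
    (hμβ : μβ = μ + β * sigmaMin A ^ 2)
    (hgrad : ∀ x, HasGradientAt f (gradf x) x)
    (hconv : ∀ x y, f x + ⟪gradf x, y - x⟫ + μ / 2 * ‖y - x‖ ^ 2 ≤ f y)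
    (hlip : ∀ x y, ⟪gradf x - gradf y, x - y⟫ ≤ L * ‖x - y‖ ^ 2)
    (xs : EuclideanSpace ℝ (Fin n)) (ls : EuclideanSpace ℝ (Fin m))
    (hKKT1 : A xs = b)
    (hKKT2 : gradf xs + (ContinuousLinearMap.adjoint A) ls = 0)
    (lam : ℝ → EuclideanSpace ℝ (Fin m))
    (x v : ℝ → EuclideanSpace ℝ (Fin n))
    (lam' : ℝ → EuclideanSpace ℝ (Fin m))
    (x' v' : ℝ → EuclideanSpace ℝ (Fin n))
    (hlamd : ∀ t, 0 ≤ t → HasDerivAt lam (lam' t) t)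
    (hxd : ∀ t, 0 ≤ t → HasDerivAt x (x' t) t)
    (hvd : ∀ t, 0 ≤ t → HasDerivAt v (v' t) t)
    (hlamc : Continuous lam') (hxc : Continuous x') (hvc : Continuous v')
    (θ γ : ℝ → ℝ)
    (hθ : ∀ t, θ t = θ₀ * Real.exp (-t))
    (hγ : ∀ t, γ t = μβ + (γ₀ - μβ) * Real.exp (-t))
    (hode1 : ∀ t, 0 ≤ t → θ t • lam' t = A (v t) - b)
    (hode2 : ∀ t, 0 ≤ t → x' t = v t - x t)
    (hode3 : ∀ t, 0 ≤ t → γ t • v' t =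
      μβ • (x t - v t) -
        (gradf (x t) + β • (ContinuousLinearMap.adjoint A) (A (x t) - b)
          + (ContinuousLinearMap.adjoint A) (lam t)))
    (Lβ : EuclideanSpace ℝ (Fin n) → EuclideanSpace ℝ (Fin m) → ℝ)
    (hLβ : ∀ z w, Lβ z w = f z + β / 2 * ‖A z - b‖ ^ 2 + ⟪w, A z - b⟫)
    (Efun : ℝ → ℝ)
    (hE : ∀ t, Efun t = Lβ (x t) ls - Lβ xs (lam t)
      + γ t / 2 * ‖v t - xs‖ ^ 2 + θ t / 2 * ‖lam t - ls‖ ^ 2) :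
    ∀ t, 0 ≤ t →
      Efun t + μβ / 2 * ∫ s in (0:ℝ)..t, Real.exp (s - t) * ‖x' s‖ ^ 2 ≤
        Real.exp (-t) * Efun 0 := by
  -- strong convexity of `L_β (·, ls)` at the KKT point
  have hsc : ∀ z : EuclideanSpace ℝ (Fin n),
      ⟪gradf z + β • (ContinuousLinearMap.adjoint A) (A z - b)
        + (ContinuousLinearMap.adjoint A) ls, xs - z⟫ + μβ / 2 * ‖xs - z‖ ^ 2 ≤
      f xs - (f z + β / 2 * ‖A z - b‖ ^ 2 + ⟪ls, A z - b⟫) := by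
    intro z
    have h1 := hconv z xs
    have hAA : A xs - b = (A z - b) + A (xs - z) := by
      rw [map_sub, hKKT1]; abel
    have hzero : ‖A xs - b‖ = 0 := by rw [hKKT1, sub_self, norm_zero]
    have h2 : (0:ℝ) = ‖A z - b‖ ^ 2 + 2 * ⟪A z - b, A (xs - z)⟫ + ‖A (xs - z)‖ ^ 2 := by
      calc (0:ℝ) = ‖A xs - b‖ ^ 2 := by rw [hzero]; ring
        _ = _ := by rw [hAA, norm_add_sq_real]
    have hI : ⟪A z - b, A (xs - z)⟫
        = -(‖A z - b‖ ^ 2 + ‖A (xs - z)‖ ^ 2) / 2 := by linarith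
    have h3' := mul_le_mul_of_nonneg_left (sigmaMin_sq_le A (xs - z)) hβ
    have h4 : ⟪gradf z + β • (ContinuousLinearMap.adjoint A) (A z - b)
        + (ContinuousLinearMap.adjoint A) ls, xs - z⟫
        = ⟪gradf z, xs - z⟫ + β * ⟪A z - b, A (xs - z)⟫ + ⟪ls, A (xs - z)⟫ := by
      rw [inner_add_left, inner_add_left, real_inner_smul_left,
        ContinuousLinearMap.adjoint_inner_left, ContinuousLinearMap.adjoint_inner_left]
    have h5 : ⟪ls, A (xs - z)⟫ = - ⟪ls, A z - b⟫ := by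
      rw [map_sub, hKKT1, show b - A z = -(A z - b) from by abel, inner_neg_right]
    rw [h4, h5, hI, hμβ]
    nlinarith [h3']
  -- derivatives of the coefficient functions
  have hexpneg : ∀ t : ℝ, HasDerivAt (fun s : ℝ => Real.exp (-s)) (-Real.exp (-t)) t := by
    intro t
    simpa [Function.comp_def] using (Real.hasDerivAt_exp (-t)).comp t ((hasDerivAt_id t).neg)
  have hγd : ∀ t : ℝ, HasDerivAt γ (μβ - γ t) t := by
    intro t
    have h1 : HasDerivAt (fun s : ℝ => μβ + (γ₀ - μβ) * Real.exp (-s))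
        (-((γ₀ - μβ) * Real.exp (-t))) t := by
      simpa [mul_neg] using (((hexpneg t).const_mul (γ₀ - μβ)).const_add μβ)
    have hval : μβ - γ t = -((γ₀ - μβ) * Real.exp (-t)) := by rw [hγ]; ring
    have hfun : γ = fun s => μβ + (γ₀ - μβ) * Real.exp (-s) := funext hγ
    rw [hval, hfun]; exact h1
  have hθd : ∀ t : ℝ, HasDerivAt θ (-(θ t)) t := by
    intro t
    have h1 : HasDerivAt (fun s : ℝ => θ₀ * Real.exp (-s)) (-(θ₀ * Real.exp (-t))) t := by
      simpa [mul_neg] using ((hexpneg t).const_mul θ₀)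
    have hval : -(θ t) = -(θ₀ * Real.exp (-t)) := by rw [hθ]
    have hfun : θ = fun s => θ₀ * Real.exp (-s) := funext hθ
    rw [hval, hfun]; exact h1
  -- explicit formula for the energy
  have hEeq : Efun = fun s => f (x s) + β / 2 * ‖A (x s) - b‖ ^ 2 + ⟪ls, A (x s) - b⟫
      - f xs + γ s / 2 * ‖v s - xs‖ ^ 2 + θ s / 2 * ‖lam s - ls‖ ^ 2 := by
    funext s
    rw [hE, hLβ, hLβ, hKKT1]
    simp only [sub_self, norm_zero, inner_zero_right]
    ring
  -- the derivative of the energy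
  set E' : ℝ → ℝ := fun s =>
      ⟪gradf (x s), x' s⟫ + β / 2 * (2 * ⟪A (x s) - b, A (x' s)⟫) + ⟪ls, A (x' s)⟫
      + ((μβ - γ s) / 2 * ‖v s - xs‖ ^ 2 + γ s / 2 * (2 * ⟪v s - xs, v' s⟫))
      + (-(θ s) / 2 * ‖lam s - ls‖ ^ 2 + θ s / 2 * (2 * ⟪lam s - ls, lam' s⟫)) with hE'def
  have hEd : ∀ t, 0 ≤ t → HasDerivAt Efun (E' t) t := by
    intro t ht
    have hu : HasDerivAt (fun s => A (x s) - b) (A (x' t)) t :=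
      (A.hasFDerivAt.comp_hasDerivAt t (hxd t ht)).sub_const b
    have c1 : HasDerivAt (fun s => f (x s)) ⟪gradf (x t), x' t⟫ t := by
      have h := ((hgrad (x t)).hasFDerivAt).comp_hasDerivAt t (hxd t ht)
      simpa [Function.comp_def, InnerProductSpace.toDual_apply_apply] using h
    have c2 : HasDerivAt (fun s => β / 2 * ‖A (x s) - b‖ ^ 2)
        (β / 2 * (2 * ⟪A (x t) - b, A (x' t)⟫)) t :=
      (hasDerivAt_norm_sq_aux hu).const_mul (β / 2)
    have c3 : HasDerivAt (fun s => ⟪ls, A (x s) - b⟫) ⟪ls, A (x' t)⟫ t := by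
      have h := HasDerivAt.inner ℝ (hasDerivAt_const t ls) hu
      simpa using h
    have c4 : HasDerivAt (fun s => γ s / 2 * ‖v s - xs‖ ^ 2)
        ((μβ - γ t) / 2 * ‖v t - xs‖ ^ 2 + γ t / 2 * (2 * ⟪v t - xs, v' t⟫)) t :=
      ((hγd t).div_const 2).mul (hasDerivAt_norm_sq_aux ((hvd t ht).sub_const xs))
    have c5 : HasDerivAt (fun s => θ s / 2 * ‖lam s - ls‖ ^ 2)
        (-(θ t) / 2 * ‖lam t - ls‖ ^ 2 + θ t / 2 * (2 * ⟪lam t - ls, lam' t⟫)) t :=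
      ((hθd t).div_const 2).mul (hasDerivAt_norm_sq_aux ((hlamd t ht).sub_const ls))
    rw [hEeq, hE'def]
    exact ((((c1.add c2).add c3).sub_const (f xs)).add c4).add c5
  -- the key pointwise inequality `E + E' + μβ/2 ‖x'‖² ≤ 0`
  have key : ∀ t, 0 ≤ t → Efun t + E' t + μβ / 2 * ‖x' t‖ ^ 2 ≤ 0 := by
    intro t ht
    simp only [hEeq, hE'def]
    set z := x t with hz
    set w := v t with hw
    set l := lam t with hl
    have e4 : x' t = w - z := hode2 t ht
    rw [e4]
    set Gl := gradf z + β • (ContinuousLinearMap.adjoint A) (A z - b)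
      + (ContinuousLinearMap.adjoint A) l with hGl
    set Gs := gradf z + β • (ContinuousLinearMap.adjoint A) (A z - b)
      + (ContinuousLinearMap.adjoint A) ls with hGs
    have e1 : θ t • lam' t = A w - b := hode1 t ht
    have e1' : θ t * ⟪l - ls, lam' t⟫ = ⟪l - ls, A w - b⟫ := by
      rw [← e1, real_inner_smul_right]
    have e2 : γ t • v' t = μβ • (z - w) - Gl := hode3 t ht
    have e2' : γ t * ⟪w - xs, v' t⟫ = ⟪w - xs, μβ • (z - w) - Gl⟫ := by
      rw [← e2, real_inner_smul_right]
    have i2 : ⟪w - xs, μβ • (z - w) - Gl⟫ = μβ * ⟪z - w, w - xs⟫ - ⟪Gl, w - xs⟫ := by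
      rw [inner_sub_right, real_inner_smul_right, real_inner_comm (w - xs) (z - w),
        real_inner_comm (w - xs) Gl]
    have i3 : ⟪Gl, w - xs⟫ = ⟪Gs, w - xs⟫ + ⟪l - ls, A w - b⟫ := by
      have h1 : ⟪Gl, w - xs⟫ - ⟪Gs, w - xs⟫
          = ⟪(ContinuousLinearMap.adjoint A) l - (ContinuousLinearMap.adjoint A) ls,
              w - xs⟫ := by
        rw [← inner_sub_left]
        congr 1
        rw [hGl, hGs]
        abel
      have h2 : (ContinuousLinearMap.adjoint A) l - (ContinuousLinearMap.adjoint A) ls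
          = (ContinuousLinearMap.adjoint A) (l - ls) := (map_sub _ _ _).symm
      have h3 : ⟪(ContinuousLinearMap.adjoint A) (l - ls), w - xs⟫
          = ⟪l - ls, A (w - xs)⟫ := ContinuousLinearMap.adjoint_inner_left A _ _
      have h4 : A (w - xs) = A w - b := by rw [map_sub, hKKT1]
      rw [h2, h3, h4] at h1
      linarith [h1]
    have i4 : ⟪gradf z, w - z⟫ + β / 2 * (2 * ⟪A z - b, A (w - z)⟫) + ⟪ls, A (w - z)⟫
        = ⟪Gs, w - z⟫ := by
      rw [hGs, inner_add_left, inner_add_left, real_inner_smul_left,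
        ContinuousLinearMap.adjoint_inner_left, ContinuousLinearMap.adjoint_inner_left]
      ring
    have i5 : ⟪Gs, w - z⟫ - ⟪Gs, w - xs⟫ = ⟪Gs, xs - z⟫ := by
      rw [← inner_sub_right]
      congr 1
      abel
    have hpyth : ‖z - xs‖ ^ 2 = ‖z - w‖ ^ 2 + 2 * ⟪z - w, w - xs⟫ + ‖w - xs‖ ^ 2 := by
      rw [show z - xs = (z - w) + (w - xs) from by abel, norm_add_sq_real]
    have hn2 : ‖xs - z‖ ^ 2 = ‖z - xs‖ ^ 2 := by rw [norm_sub_rev]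
    have hn3 : μβ / 2 * ‖z - w‖ ^ 2 = μβ / 2 * ‖w - z‖ ^ 2 := by rw [norm_sub_rev z w]
    have i6 : μβ * ⟪z - w, w - xs⟫
        = μβ / 2 * (‖z - xs‖ ^ 2 - ‖z - w‖ ^ 2 - ‖w - xs‖ ^ 2) := by
      rw [hpyth]; ring
    have hsc' := hsc z
    rw [hn2] at hsc'
    have hsc2 : ⟪Gs, xs - z⟫ + μβ / 2 * ‖z - xs‖ ^ 2
        ≤ f xs - (f z + β / 2 * ‖A z - b‖ ^ 2 + ⟪ls, A z - b⟫) := hsc'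
    linarith [hsc2, e1', e2', i2, i3, i4, i5, i6, hn3]
  -- the Lyapunov function
  have hgcont : Continuous (fun r => Real.exp r * ‖x' r‖ ^ 2) :=
    Real.continuous_exp.mul ((hxc.norm).pow 2)
  set φ : ℝ → ℝ := fun s => Real.exp s * Efun s
      + μβ / 2 * ∫ r in (0:ℝ)..s, Real.exp r * ‖x' r‖ ^ 2 with hφdef
  have hint : ∀ t : ℝ, HasDerivAt (fun s => ∫ r in (0:ℝ)..s, Real.exp r * ‖x' r‖ ^ 2)
      (Real.exp t * ‖x' t‖ ^ 2) t := fun t =>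
    intervalIntegral.integral_hasDerivAt_right (hgcont.intervalIntegrable 0 t)
      (hgcont.stronglyMeasurableAtFilter _ _) hgcont.continuousAt
  have hφd : ∀ t, 0 ≤ t → HasDerivAt φ
      (Real.exp t * Efun t + Real.exp t * E' t + μβ / 2 * (Real.exp t * ‖x' t‖ ^ 2)) t := by
    intro t ht
    have h1 := (Real.hasDerivAt_exp t).mul (hEd t ht)
    have h2 := (hint t).const_mul (μβ / 2)
    rw [hφdef]
    exact h1.add h2
  have hanti : AntitoneOn φ (Set.Ici (0:ℝ)) := by
    apply antitoneOn_of_deriv_nonpos (convex_Ici 0)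
    · intro t ht
      exact ((hφd t ht).continuousAt).continuousWithinAt
    · intro t ht
      rw [interior_Ici] at ht
      exact ((hφd t (le_of_lt ht)).differentiableAt).differentiableWithinAt
    · intro t ht
      rw [interior_Ici] at ht
      rw [(hφd t (le_of_lt ht)).deriv]
      have hk := key t (le_of_lt ht)
      calc Real.exp t * Efun t + Real.exp t * E' t + μβ / 2 * (Real.exp t * ‖x' t‖ ^ 2)
          = Real.exp t * (Efun t + E' t + μβ / 2 * ‖x' t‖ ^ 2) := by ring
        _ ≤ 0 := mul_nonpos_of_nonneg_of_nonpos (Real.exp_pos t).le hk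
  -- conclusion
  intro t ht
  have h0 : φ t ≤ φ 0 := hanti Set.self_mem_Ici ht ht
  have hφ0 : φ 0 = Efun 0 := by
    rw [hφdef]
    simp [Real.exp_zero, intervalIntegral.integral_same]
  have hφt : φ t = Real.exp t * Efun t
      + μβ / 2 * ∫ r in (0:ℝ)..t, Real.exp r * ‖x' r‖ ^ 2 := by rw [hφdef]
  have hintEq : (∫ s in (0:ℝ)..t, Real.exp (s - t) * ‖x' s‖ ^ 2)
      = Real.exp (-t) * ∫ r in (0:ℝ)..t, Real.exp r * ‖x' r‖ ^ 2 := by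
    have hptw : ∀ s : ℝ, Real.exp (s - t) * ‖x' s‖ ^ 2
        = Real.exp (-t) * (Real.exp s * ‖x' s‖ ^ 2) := by
      intro s
      rw [Real.exp_sub, Real.exp_neg]
      ring
    simp only [hptw]
    rw [intervalIntegral.integral_const_mul]
  have hmul : Real.exp (-t) * Real.exp t = 1 := by
    rw [← Real.exp_add, neg_add_cancel, Real.exp_zero]
  rw [hintEq]
  calc Efun t + μβ / 2 * (Real.exp (-t) * ∫ r in (0:ℝ)..t, Real.exp r * ‖x' r‖ ^ 2)
      = Real.exp (-t) * φ t := by rw [hφt]; linear_combination (-Efun t) * hmul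
    _ ≤ Real.exp (-t) * φ 0 := mul_le_mul_of_nonneg_left h0 (Real.exp_pos (-t)).le
    _ = Real.exp (-t) * Efun 0 := by rw [hφ0]
end

section
/- Let (λ_k, x_k, v_k) be generated by the semi-implicit scheme: θ_k(λ_{k+1} − λ_k)/α_k = A v_{k+1} − b; (x_{k+1} − x_k)/α_k = v_{k+1} − x_{k+1}; γ_k(v_{k+1} − v_k)/α_k = μ_β(x_{k+1} − v_{k+1}) − (ξ_{k+1} + Aᵀλ̂_k) with ξ_{k+1} ∈ ∂f_β(x_{k+1}) + N_X(x_{k+1}) and λ̂_k = λ_k + (α_k/θ_k)(A v_k − b), with x₀ ∈ X, v₀ ∈ ℝⁿ, θ_{k+1} = θ_k/(1+α_k), γ_{k+1} = (γ_k + μ_β α_k)/(1+α_k), θ₀ = 1, γ₀ > 0, and γ_k θ_k = ‖A‖² α_k². Define E_k = L_β(x_k, λ*) − L_β(x*, λ_k) + (γ_k/2)‖v_k − x*‖² + (θ_k/2)‖λ_k − λ*‖² and R₀ = √(2E₀) + ‖λ₀ − λ*‖ + ‖Ax₀ − b‖. Then for all k: ‖Ax_k − b‖ ≤ θ_k R₀;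 0 ≤ L(x_k, λ*) − L(x*, λ_k) ≤ θ_k E₀; and |f(x_k) − f(x*)| ≤ θ_k(E₀ + R₀‖λ*‖), where L(x,λ) = f(x) + δ_X(x) + ⟨λ, Ax − b⟩. -/
open scoped RealInnerProductSpace Pointwise

/-- The convex subdifferential. -/
def subdiff {n : ℕ} (f : EuclideanSpace ℝ (Fin n) → ℝ)
    (x : EuclideanSpace ℝ (Fin n)) : Set (EuclideanSpace ℝ (Fin n)) :=
  {p | ∀ y, f x + ⟪p, y - x⟫ ≤ f y}

/-- The normal cone of `X` at `x` (empty if `x ∉ X`). -/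
def normalCone {n : ℕ} (X : Set (EuclideanSpace ℝ (Fin n)))
    (x : EuclideanSpace ℝ (Fin n)) : Set (EuclideanSpace ℝ (Fin n)) :=
  {p | x ∈ X ∧ ∀ z ∈ X, ⟪p, z - x⟫ ≤ 0}

lemma sigmaMin_bound {n m : ℕ} (A : EuclideanSpace ℝ (Fin n) →L[ℝ] EuclideanSpace ℝ (Fin m))
    (w : EuclideanSpace ℝ (Fin n)) : sigmaMin A ^ 2 * ‖w‖ ^ 2 ≤ ‖A w‖ ^ 2 := by
  rcases eq_or_ne w 0 with h | h
  · simp [h]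
  · have hw : 0 < ‖w‖ := norm_pos_iff.mpr h
    have hun : ‖(‖w‖⁻¹ • w : EuclideanSpace ℝ (Fin n))‖ = 1 := by
      rw [norm_smul, Real.norm_of_nonneg (inv_nonneg.mpr hw.le), inv_mul_cancel₀ hw.ne']
    have hmem : ‖A (‖w‖⁻¹ • w)‖ ∈ {c : ℝ | ∃ x : EuclideanSpace ℝ (Fin n), ‖x‖ = 1 ∧ ‖A x‖ = c} :=
      ⟨_, hun, rfl⟩
    have hbdd : BddBelow {c : ℝ | ∃ x : EuclideanSpace ℝ (Fin n), ‖x‖ = 1 ∧ ‖A x‖ = c} := by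
      refine ⟨0, fun c hc => ?_⟩
      obtain ⟨y, -, hy⟩ := hc
      exact hy ▸ norm_nonneg _
    have h1 : sigmaMin A ≤ ‖A (‖w‖⁻¹ • w)‖ := csInf_le hbdd hmem
    have h0 : 0 ≤ sigmaMin A := by
      refine le_csInf ⟨_, hmem⟩ (fun c hc => ?_)
      obtain ⟨y, -, hy⟩ := hc
      exact hy ▸ norm_nonneg _
    have hAu : ‖A (‖w‖⁻¹ • w)‖ = ‖w‖⁻¹ * ‖A w‖ := by
      rw [map_smul, norm_smul, Real.norm_of_nonneg (inv_nonneg.mpr hw.le)]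
    rw [hAu] at h1
    have h2 : sigmaMin A ^ 2 ≤ (‖w‖⁻¹ * ‖A w‖) ^ 2 := by nlinarith
    have h3 : (‖w‖⁻¹ * ‖A w‖) ^ 2 * ‖w‖ ^ 2 = ‖A w‖ ^ 2 := by field_simp
    nlinarith [mul_le_mul_of_nonneg_right h2 (sq_nonneg ‖w‖)]

lemma subdiff_decomp {n m : ℕ} {f fβ : EuclideanSpace ℝ (Fin n) → ℝ}
    {A : EuclideanSpace ℝ (Fin n) →L[ℝ] EuclideanSpace ℝ (Fin m)}
    {b : EuclideanSpace ℝ (Fin m)} {β : ℝ}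
    (hβ : 0 ≤ β) (hfcv : ConvexOn ℝ Set.univ f)
    (hfβ : ∀ z, fβ z = f z + β / 2 * ‖A z - b‖ ^ 2)
    {x p : EuclideanSpace ℝ (Fin n)} (hp : p ∈ subdiff fβ x) :
    p - β • ((ContinuousLinearMap.adjoint A) (A x - b)) ∈ subdiff f x := by
  intro y
  set d := y - x with hd
  have key : ∀ t : ℝ, 0 < t → t ≤ 1 →
      ⟪p, d⟫ - β * ⟪A x - b, A d⟫ ≤ f y - f x + t * (β / 2 * ‖A d‖ ^ 2) := by
    intro t ht ht1
    have hsub := hp (x + t • d)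
    have h1 : (x + t • d) - x = t • d := by abel
    rw [hfβ, hfβ, h1, real_inner_smul_right] at hsub
    have h3 : f (x + t • d) ≤ (1 - t) * f x + t * f y := by
      have hc := hfcv.2 (Set.mem_univ x) (Set.mem_univ y)
        (by linarith : (0:ℝ) ≤ 1 - t) ht.le (by ring)
      have he : (1 - t) • x + t • y = x + t • d := by rw [hd]; module
      rwa [he] at hc
    have h4 : ‖A (x + t • d) - b‖ ^ 2
        = ‖A x - b‖ ^ 2 + 2 * (t * ⟪A x - b, A d⟫) + t ^ 2 * ‖A d‖ ^ 2 := by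
      have he : A (x + t • d) - b = (A x - b) + t • (A d) := by
        rw [map_add, map_smul]; abel
      rw [he, norm_add_sq_real, real_inner_smul_right, norm_smul,
        Real.norm_of_nonneg ht.le, mul_pow]
    rw [h4] at hsub
    have h5 : t * (⟪p, d⟫ - β * ⟪A x - b, A d⟫)
        ≤ t * (f y - f x + t * (β / 2 * ‖A d‖ ^ 2)) := by nlinarith [hsub, h3]
    exact le_of_mul_le_mul_left (by linarith) ht
  have hC0 : 0 ≤ β / 2 * ‖A d‖ ^ 2 := by positivity
  have hlim : ⟪p, d⟫ - β * ⟪A x - b, A d⟫ ≤ f y - f x := by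
    apply le_of_forall_pos_le_add
    intro ε hε
    rcases eq_or_lt_of_le hC0 with hc | hc
    · have := key 1 one_pos le_rfl
      linarith [hc.symm ▸ this]
    · have ht : 0 < min 1 (ε / (β / 2 * ‖A d‖ ^ 2)) := lt_min one_pos (div_pos hε hc)
      have hk := key _ ht (min_le_left _ _)
      have h2 : min 1 (ε / (β / 2 * ‖A d‖ ^ 2)) * (β / 2 * ‖A d‖ ^ 2) ≤ ε := by
        calc min 1 (ε / (β / 2 * ‖A d‖ ^ 2)) * (β / 2 * ‖A d‖ ^ 2)
            ≤ (ε / (β / 2 * ‖A d‖ ^ 2)) * (β / 2 * ‖A d‖ ^ 2) :=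
              mul_le_mul_of_nonneg_right (min_le_right _ _) hC0
          _ = ε := div_mul_cancel₀ _ hc.ne'
      linarith
  have hip : ⟪p - β • ((ContinuousLinearMap.adjoint A) (A x - b)), d⟫
      = ⟪p, d⟫ - β * ⟪A x - b, A d⟫ := by
    rw [inner_sub_left, real_inner_smul_left, ContinuousLinearMap.adjoint_inner_left]
  rw [hip]
  linarith

lemma fβ_strong {n m : ℕ} {X : Set (EuclideanSpace ℝ (Fin n))}
    {f fβ : EuclideanSpace ℝ (Fin n) → ℝ}
    {A : EuclideanSpace ℝ (Fin n) →L[ℝ] EuclideanSpace ℝ (Fin m)}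
    {b : EuclideanSpace ℝ (Fin m)} {β μ μβ : ℝ}
    (hβ : 0 ≤ β) (hfcv : ConvexOn ℝ Set.univ f)
    (hfβ : ∀ z, fβ z = f z + β / 2 * ‖A z - b‖ ^ 2)
    (hμβ : μβ = μ + β * sigmaMin A ^ 2)
    (hsc : ∀ x ∈ X, ∀ y ∈ X, ∀ p ∈ subdiff f x,
      f x + ⟪p, y - x⟫ + μ / 2 * ‖y - x‖ ^ 2 ≤ f y)
    {x z p : EuclideanSpace ℝ (Fin n)} (hx : x ∈ X) (hz : z ∈ X)
    (hp : p ∈ subdiff fβ x) :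
    fβ x + ⟪p, z - x⟫ + μβ / 2 * ‖z - x‖ ^ 2 ≤ fβ z := by
  have hp' := subdiff_decomp hβ hfcv hfβ hp
  have h1 := hsc x hx z hz _ hp'
  have hip : ⟪p - β • ((ContinuousLinearMap.adjoint A) (A x - b)), z - x⟫
      = ⟪p, z - x⟫ - β * ⟪A x - b, A (z - x)⟫ := by
    rw [inner_sub_left, real_inner_smul_left, ContinuousLinearMap.adjoint_inner_left]
  rw [hip] at h1
  have h2 : ‖A z - b‖ ^ 2
      = ‖A x - b‖ ^ 2 + 2 * ⟪A x - b, A (z - x)⟫ + ‖A (z - x)‖ ^ 2 := by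
    have he : A z - b = (A x - b) + A (z - x) := by rw [map_sub]; abel
    rw [he, norm_add_sq_real]
  have h3 := sigmaMin_bound A (z - x)
  rw [hfβ z, hfβ x, h2, hμβ]
  nlinarith [mul_le_mul_of_nonneg_left h3 hβ]

set_option maxHeartbeats 1000000 in
lemma one_step {n m : ℕ} {X : Set (EuclideanSpace ℝ (Fin n))}
    {f fβ : EuclideanSpace ℝ (Fin n) → ℝ}
    {A : EuclideanSpace ℝ (Fin n) →L[ℝ] EuclideanSpace ℝ (Fin m)}
    {b : EuclideanSpace ℝ (Fin m)} {β μ μβ : ℝ}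
    (hβ : 0 ≤ β) (hfcv : ConvexOn ℝ Set.univ f)
    (hfβ : ∀ z, fβ z = f z + β / 2 * ‖A z - b‖ ^ 2)
    (hμβ : μβ = μ + β * sigmaMin A ^ 2) (hμβ0 : 0 ≤ μβ)
    (hsc : ∀ x ∈ X, ∀ y ∈ X, ∀ p ∈ subdiff f x,
      f x + ⟪p, y - x⟫ + μ / 2 * ‖y - x‖ ^ 2 ≤ f y)
    {xs : EuclideanSpace ℝ (Fin n)} {ls : EuclideanSpace ℝ (Fin m)}
    (hxs : xs ∈ X) (hKKT1 : A xs = b)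
    {a t g tp gp : ℝ} (ha : 0 < a) (ht : 0 < t) (hg : 0 < g)
    (htp : tp = t / (1 + a)) (hgp : gp = (g + μβ * a) / (1 + a))
    (hstep : g * t = ‖A‖ ^ 2 * a ^ 2)
    {X0 X1 V0 V1 : EuclideanSpace ℝ (Fin n)} {L0 L1 lh : EuclideanSpace ℝ (Fin m)}
    (hX0 : X0 ∈ X)
    (hdual : (t / a) • (L1 - L0) = A V1 - b)
    (hprim : a⁻¹ • (X1 - X0) = V1 - X1)
    (hlh : lh = L0 + (a / t) • (A V0 - b))
    {ξ p q : EuclideanSpace ℝ (Fin n)}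
    (hp : p ∈ subdiff fβ X1) (hq : q ∈ normalCone X X1) (hpq : p + q = ξ)
    (hvup : (g / a) • (V1 - V0) =
      μβ • (X1 - V1) - (ξ + (ContinuousLinearMap.adjoint A) lh)) :
    (1 + a) * (fβ X1 + ⟪ls, A X1 - b⟫ - fβ xs
        + gp / 2 * ‖V1 - xs‖ ^ 2 + tp / 2 * ‖L1 - ls‖ ^ 2)
      ≤ fβ X0 + ⟪ls, A X0 - b⟫ - fβ xs
        + g / 2 * ‖V0 - xs‖ ^ 2 + t / 2 * ‖L0 - ls‖ ^ 2 := by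
  have h1a : (0:ℝ) < 1 + a := by linarith
  have hX1 : X1 ∈ X := hq.1
  -- subgradient inequalities
  have hsplit : ∀ z₀ : EuclideanSpace ℝ (Fin n), z₀ ∈ X →
      fβ X1 - fβ z₀ ≤ ⟪ξ, X1 - z₀⟫ - μβ / 2 * ‖z₀ - X1‖ ^ 2 := by
    intro z₀ hz₀
    have h1 := fβ_strong hβ hfcv hfβ hμβ hsc hX1 hz₀ hp
    have h2 := hq.2 z₀ hz₀
    have h3 : ⟪ξ, X1 - z₀⟫ = -⟪p, z₀ - X1⟫ - ⟪q, z₀ - X1⟫ := by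
      rw [← hpq, inner_add_left, show X1 - z₀ = -(z₀ - X1) from (neg_sub _ _).symm,
        inner_neg_right, inner_neg_right]
      ring
    linarith
  have hA' := hsplit X0 hX0
  have hB' := hsplit xs hxs
  have hB2 : a * (fβ X1 - fβ xs) ≤ a * (⟪ξ, X1 - xs⟫ - μβ / 2 * ‖xs - X1‖ ^ 2) :=
    mul_le_mul_of_nonneg_left hB' ha.le
  -- vector identities
  have hXv : X1 - X0 = a • (V1 - X1) := by
    calc X1 - X0 = a • (a⁻¹ • (X1 - X0)) := by
          rw [smul_smul, mul_inv_cancel₀ ha.ne', one_smul]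
      _ = a • (V1 - X1) := by rw [hprim]
  have hcomb : (X1 - X0) + a • (X1 - xs) = a • (V1 - xs) := by rw [hXv]; module
  have hξd : ξ = μβ • (X1 - V1) - (g / a) • (V1 - V0)
      - (ContinuousLinearMap.adjoint A) lh := by
    have h2 := eq_sub_iff_add_eq.mp hvup
    rw [← h2]; abel
  -- HS
  have e1 : ⟪ξ, X1 - X0⟫ + a * ⟪ξ, X1 - xs⟫ = a * ⟪ξ, V1 - xs⟫ := by
    rw [← real_inner_smul_right, ← inner_add_right, hcomb, real_inner_smul_right]
  have e3 : A (V1 - xs) = (t / a) • (L1 - L0) := by rw [map_sub, hKKT1, ← hdual]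
  have e2 : ⟪ξ, V1 - xs⟫ = μβ * ⟪X1 - V1, V1 - xs⟫ - (g / a) * ⟪V1 - V0, V1 - xs⟫
      - ⟪lh, A (V1 - xs)⟫ := by
    rw [hξd, inner_sub_left, inner_sub_left, real_inner_smul_left, real_inner_smul_left,
      ContinuousLinearMap.adjoint_inner_left]
  have eb : A V0 - b = A (V0 - xs) := by rw [map_sub, hKKT1]
  have e5 : ⟪A (V0 - xs), L1 - L0⟫
      = ⟪A (V1 - xs), L1 - L0⟫ - ⟪A (V1 - V0), L1 - L0⟫ := by
    rw [← inner_sub_left, ← map_sub, show (V1 - xs) - (V1 - V0) = V0 - xs by abel]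
  have e6 : ⟪A (V1 - xs), L1 - L0⟫ = (t / a) * ‖L1 - L0‖ ^ 2 := by
    rw [e3, real_inner_smul_left, real_inner_self_eq_norm_sq]
  have e4 : ⟪lh, A (V1 - xs)⟫ = (t / a) * (⟪ls, L1 - L0⟫ + ⟪L0 - ls, L1 - L0⟫
      + (a / t) * ((t / a) * ‖L1 - L0‖ ^ 2 - ⟪A (V1 - V0), L1 - L0⟫)) := by
    rw [e3, real_inner_smul_right, hlh, inner_add_left, real_inner_smul_left, eb, e5, e6,
      show ⟪L0, L1 - L0⟫ = ⟪ls, L1 - L0⟫ + ⟪L0 - ls, L1 - L0⟫ by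
        rw [← inner_add_left]; congr 1; abel]
  have hIS : ⟪ξ, X1 - X0⟫ + a * ⟪ξ, X1 - xs⟫
      = a * μβ * ⟪X1 - V1, V1 - xs⟫ - g * ⟪V1 - V0, V1 - xs⟫
        - t * ⟪ls, L1 - L0⟫ - t * ⟪L0 - ls, L1 - L0⟫ - t * ‖L1 - L0‖ ^ 2
        + a * ⟪A (V1 - V0), L1 - L0⟫ := by
    rw [e1, e2, e4]
    field_simp
    ring
  -- hls
  have hv : (1 + a) • (A X1 - b) - (A X0 - b) = t • (L1 - L0) := by
    have h2 : A X1 - A X0 = a • (A V1 - A X1) := by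
      rw [← map_sub, hXv, map_smul, map_sub]
    calc (1 + a) • (A X1 - b) - (A X0 - b)
        = (A X1 - A X0) + a • (A X1 - b) := by module
      _ = a • (A V1 - A X1) + a • (A X1 - b) := by rw [h2]
      _ = a • (A V1 - b) := by module
      _ = a • ((t / a) • (L1 - L0)) := by rw [← hdual]
      _ = t • (L1 - L0) := by rw [smul_smul]; congr 1; field_simp
  have hls : (1 + a) * ⟪ls, A X1 - b⟫ - ⟪ls, A X0 - b⟫ = t * ⟪ls, L1 - L0⟫ := by
    have hls' : ⟪ls, (1 + a) • (A X1 - b) - (A X0 - b)⟫ = ⟪ls, t • (L1 - L0)⟫ := by rw [hv]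
    rw [inner_sub_right, real_inner_smul_right, real_inner_smul_right] at hls'
    linarith [hls']
  -- polarizations
  have hpol1 : g * ⟪V1 - V0, V1 - xs⟫
      = g / 2 * ‖V1 - xs‖ ^ 2 - g / 2 * ‖V0 - xs‖ ^ 2 + g / 2 * ‖V1 - V0‖ ^ 2 := by
    have h := norm_sub_sq_real (V1 - xs) (V1 - V0)
    rw [show (V1 - xs) - (V1 - V0) = V0 - xs by abel] at h
    have h3 : ⟪V1 - V0, V1 - xs⟫ = ⟪V1 - xs, V1 - V0⟫ := real_inner_comm _ _
    linear_combination g / 2 * h + g * h3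
  have hpol2 : t * ⟪L0 - ls, L1 - L0⟫
      = t / 2 * ‖L1 - ls‖ ^ 2 - t / 2 * ‖L0 - ls‖ ^ 2 - t / 2 * ‖L1 - L0‖ ^ 2 := by
    have h := norm_add_sq_real (L0 - ls) (L1 - L0)
    rw [show (L0 - ls) + (L1 - L0) = L1 - ls by abel] at h
    linear_combination (-(t / 2)) * h
  have hpol3u : a * μβ * ⟪X1 - V1, V1 - xs⟫ - a * (μβ / 2 * ‖xs - X1‖ ^ 2)
      + μβ * a / 2 * ‖V1 - xs‖ ^ 2 = -(a * μβ / 2) * ‖X1 - V1‖ ^ 2 := by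
    have h := norm_add_sq_real (X1 - V1) (V1 - xs)
    rw [show (X1 - V1) + (V1 - xs) = X1 - xs by abel] at h
    rw [show ‖xs - X1‖ = ‖X1 - xs‖ from norm_sub_rev _ _]
    linear_combination (-(a * μβ / 2)) * h
  -- cross bound
  have hcross : a * ⟪A (V1 - V0), L1 - L0⟫
      ≤ g / 2 * ‖V1 - V0‖ ^ 2 + t / 2 * ‖L1 - L0‖ ^ 2 := by
    have h1 : ⟪A (V1 - V0), L1 - L0⟫ ≤ ‖A (V1 - V0)‖ * ‖L1 - L0‖ := real_inner_le_norm _ _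
    have h2 : ‖A (V1 - V0)‖ ≤ ‖A‖ * ‖V1 - V0‖ := A.le_opNorm _
    have h3 : a * ⟪A (V1 - V0), L1 - L0⟫ ≤ a * (‖A‖ * ‖V1 - V0‖ * ‖L1 - L0‖) := by
      refine mul_le_mul_of_nonneg_left (h1.trans ?_) ha.le
      exact mul_le_mul_of_nonneg_right h2 (norm_nonneg _)
    have hid : 2 * t * (g / 2 * ‖V1 - V0‖ ^ 2 + t / 2 * ‖L1 - L0‖ ^ 2)
        - 2 * t * (a * (‖A‖ * ‖V1 - V0‖ * ‖L1 - L0‖))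
        = (a * ‖A‖ * ‖V1 - V0‖ - t * ‖L1 - L0‖) ^ 2 := by
      linear_combination ‖V1 - V0‖ ^ 2 * hstep
    have h4 : 2 * t * (a * (‖A‖ * ‖V1 - V0‖ * ‖L1 - L0‖))
        ≤ 2 * t * (g / 2 * ‖V1 - V0‖ ^ 2 + t / 2 * ‖L1 - L0‖ ^ 2) := by
      have hsq := sq_nonneg (a * ‖A‖ * ‖V1 - V0‖ - t * ‖L1 - L0‖)
      linarith [hid]
    have h5 := le_of_mul_le_mul_left h4 (by linarith : (0:ℝ) < 2 * t)
    linarith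
  -- recurrences
  have hg1 : (1 + a) * gp = g + μβ * a := by rw [hgp]; field_simp
  have ht1 : (1 + a) * tp = t := by rw [htp]; field_simp
  have hrec1 : (1 + a) * (gp / 2 * ‖V1 - xs‖ ^ 2) = (g + μβ * a) / 2 * ‖V1 - xs‖ ^ 2 := by
    linear_combination ‖V1 - xs‖ ^ 2 / 2 * hg1
  have hrec2 : (1 + a) * (tp / 2 * ‖L1 - ls‖ ^ 2) = t / 2 * ‖L1 - ls‖ ^ 2 := by
    linear_combination ‖L1 - ls‖ ^ 2 / 2 * ht1
  have hn1 : 0 ≤ μβ / 2 * ‖X0 - X1‖ ^ 2 := by positivity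
  have hn2 : 0 ≤ a * μβ / 2 * ‖X1 - V1‖ ^ 2 := by positivity
  linarith [hA', hB2, hIS, hls, hpol1, hpol2, hpol3u, hcross, hrec1, hrec2, hn1, hn2]

set_option maxHeartbeats 1000000 in
/-- Theorem 4.1 (rate part): nonergodic convergence rates for the semi-implicit scheme (4.2)
with step size `γ_k θ_k = ‖A‖² α_k²`. -/
theorem semi_implicit_scheme_rates {n m : ℕ}
    (X : Set (EuclideanSpace ℝ (Fin n)))
    (hXne : X.Nonempty) (hXcl : IsClosed X) (hXcv : Convex ℝ X)
    (f : EuclideanSpace ℝ (Fin n) → ℝ)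
    (hfcv : ConvexOn ℝ Set.univ f)
    (A : EuclideanSpace ℝ (Fin n) →L[ℝ] EuclideanSpace ℝ (Fin m))
    (b : EuclideanSpace ℝ (Fin m)) (hA : 0 < ‖A‖)
    (μ β μβ : ℝ) (hμ : 0 ≤ μ) (hβ : 0 ≤ β)
    (hμβ : μβ = μ + β * sigmaMin A ^ 2)
    (hsc : ∀ x ∈ X, ∀ y ∈ X, ∀ p ∈ subdiff f x,
      f x + ⟪p, y - x⟫ + μ / 2 * ‖y - x‖ ^ 2 ≤ f y)
    (fβ : EuclideanSpace ℝ (Fin n) → ℝ)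
    (hfβ : ∀ z, fβ z = f z + β / 2 * ‖A z - b‖ ^ 2)
    (Lβ : EuclideanSpace ℝ (Fin n) → EuclideanSpace ℝ (Fin m) → ℝ)
    (hLβ : ∀ z w, Lβ z w = fβ z + ⟪w, A z - b⟫)
    (xs : EuclideanSpace ℝ (Fin n)) (ls : EuclideanSpace ℝ (Fin m))
    (hxs : xs ∈ X) (hKKT1 : A xs = b)
    (hKKT2 : ∃ p ∈ subdiff f xs, ∃ q ∈ normalCone X xs,
      p + q + (ContinuousLinearMap.adjoint A) ls = 0)
    (θ γ α : ℕ → ℝ)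
    (hα : ∀ k, 0 < α k) (hθ0 : θ 0 = 1) (hγ0 : 0 < γ 0)
    (hθ : ∀ k, θ (k + 1) = θ k / (1 + α k))
    (hγ : ∀ k, γ (k + 1) = (γ k + μβ * α k) / (1 + α k))
    (lam : ℕ → EuclideanSpace ℝ (Fin m))
    (x v : ℕ → EuclideanSpace ℝ (Fin n))
    (hx0 : x 0 ∈ X)
    (hdual : ∀ k, (θ k / α k) • (lam (k + 1) - lam k) = A (v (k + 1)) - b)
    (hprim : ∀ k, (α k)⁻¹ • (x (k + 1) - x k) = v (k + 1) - x (k + 1))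
    (lamhat : ℕ → EuclideanSpace ℝ (Fin m))
    (hlamhat : ∀ k, lamhat k = lam k + (α k / θ k) • (A (v k) - b))
    (hvup : ∀ k, ∃ ξ ∈ subdiff fβ (x (k + 1)) + normalCone X (x (k + 1)),
      (γ k / α k) • (v (k + 1) - v k) =
        μβ • (x (k + 1) - v (k + 1)) -
          (ξ + (ContinuousLinearMap.adjoint A) (lamhat k)))
    (hstep : ∀ k, γ k * θ k = ‖A‖ ^ 2 * α k ^ 2)
    (Ef : ℕ → ℝ)
    (hEf : ∀ k, Ef k = Lβ (x k) ls - Lβ xs (lam k)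
      + γ k / 2 * ‖v k - xs‖ ^ 2 + θ k / 2 * ‖lam k - ls‖ ^ 2)
    (Lag : EuclideanSpace ℝ (Fin n) → EuclideanSpace ℝ (Fin m) → ℝ)
    (hLag : ∀ z w, Lag z w = f z + ⟪w, A z - b⟫)
    (R₀ : ℝ)
    (hR₀ : R₀ = Real.sqrt (2 * Ef 0) + ‖lam 0 - ls‖ + ‖A (x 0) - b‖) :
    ∀ k, ‖A (x k) - b‖ ≤ θ k * R₀ ∧
      (0 ≤ Lag (x k) ls - Lag xs (lam k) ∧
        Lag (x k) ls - Lag xs (lam k) ≤ θ k * Ef 0) ∧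
      |f (x k) - f xs| ≤ θ k * (Ef 0 + R₀ * ‖ls‖) := by
  have hθpos : ∀ k, 0 < θ k := by
    intro k
    induction k with
    | zero => rw [hθ0]; norm_num
    | succ k ih => rw [hθ k]; exact div_pos ih (by linarith [hα k])
  have hμβ0 : 0 ≤ μβ := by
    rw [hμβ]
    have h1 := sq_nonneg (sigmaMin A)
    nlinarith
  have hγpos : ∀ k, 0 < γ k := by
    intro k
    induction k with
    | zero => exact hγ0
    | succ k ih =>
      rw [hγ k]
      have h1 := mul_nonneg hμβ0 (hα k).le
      exact div_pos (by linarith) (by linarith [hα k])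
  have hxX : ∀ k, x k ∈ X := by
    intro k
    cases k with
    | zero => exact hx0
    | succ k =>
      obtain ⟨ξ, hmem, -⟩ := hvup k
      rw [Set.mem_add] at hmem
      obtain ⟨p, hp, q, hq, -⟩ := hmem
      exact hq.1
  have hAxs : A xs - b = 0 := by rw [hKKT1, sub_self]
  have hfβxs : fβ xs = f xs := by rw [hfβ xs, hAxs]; simp
  have hgap : ∀ z ∈ X, 0 ≤ f z - f xs + ⟪ls, A z - b⟫ := by
    obtain ⟨p, hp, q, hq, hpq⟩ := hKKT2
    intro z hz
    have h1 := hp z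
    have h2 := hq.2 z hz
    have hp' : p = -(q + (ContinuousLinearMap.adjoint A) ls) := by
      rw [add_assoc] at hpq
      exact eq_neg_of_add_eq_zero_left hpq
    have h3 : ⟪p, z - xs⟫ = -⟪q, z - xs⟫ - ⟪ls, A z - b⟫ := by
      rw [hp', inner_neg_left, inner_add_left, ContinuousLinearMap.adjoint_inner_left,
        map_sub, hKKT1]
      ring
    rw [h3] at h1
    linarith
  have hE0 : 0 ≤ Ef 0 := by
    have h := hgap (x 0) hx0
    have h1 : 0 ≤ β / 2 * ‖A (x 0) - b‖ ^ 2 := by positivity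
    have h2 : 0 ≤ γ 0 / 2 * ‖v 0 - xs‖ ^ 2 := by positivity
    have h3 : 0 ≤ θ 0 / 2 * ‖lam 0 - ls‖ ^ 2 := by
      rw [hθ0]; positivity
    rw [hEf 0, hLβ, hLβ, hfβxs, hAxs, hfβ (x 0)]
    simp only [inner_zero_right, add_zero]
    linarith
  have hdec : ∀ k, (1 + α k) * Ef (k + 1) ≤ Ef k := by
    intro k
    obtain ⟨ξ, hmem, hveq⟩ := hvup k
    rw [Set.mem_add] at hmem
    obtain ⟨p, hp, q, hq, hpq⟩ := hmem
    have h := one_step (ls := ls) hβ hfcv hfβ hμβ hμβ0 hsc hxs hKKT1 (hα k) (hθpos k) (hγpos k)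
      (hθ k) (hγ k) (hstep k) (hxX k) (hdual k) (hprim k) (hlamhat k) hp hq hpq hveq
    rw [hEf (k + 1), hEf k, hLβ, hLβ, hLβ, hLβ, hAxs]
    simp only [inner_zero_right, add_zero]
    linarith
  have hEθ : ∀ k, Ef k ≤ θ k * Ef 0 := by
    intro k
    induction k with
    | zero => rw [hθ0, one_mul]
    | succ k ih =>
      have h1 := hdec k
      have hne : (1 + α k) ≠ 0 := by have := hα k; positivity
      have h2 : (1 + α k) * θ (k + 1) = θ k := by
        rw [hθ k]; field_simp
      have h3 : (1 + α k) * Ef (k + 1) ≤ (1 + α k) * (θ (k + 1) * Ef 0) := by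
        calc (1 + α k) * Ef (k + 1) ≤ Ef k := h1
          _ ≤ θ k * Ef 0 := ih
          _ = (1 + α k) * (θ (k + 1) * Ef 0) := by rw [← h2]; ring
      exact le_of_mul_le_mul_left h3 (by linarith [hα k])
  have hres : ∀ k, A (x k) - b = θ k • (A (x 0) - b - lam 0 + lam k) := by
    intro k
    induction k with
    | zero => rw [hθ0, one_smul]; abel
    | succ k ih =>
      have hXv : x (k + 1) - x k = α k • (v (k + 1) - x (k + 1)) := by
        calc x (k + 1) - x k = α k • ((α k)⁻¹ • (x (k + 1) - x k)) := by
              rw [smul_smul, mul_inv_cancel₀ (hα k).ne', one_smul]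
          _ = α k • (v (k + 1) - x (k + 1)) := by rw [hprim k]
      have h2 : A (x (k + 1)) - A (x k) = α k • (A (v (k + 1)) - A (x (k + 1))) := by
        rw [← map_sub, hXv, map_smul, map_sub]
      have hv2 : (1 + α k) • (A (x (k + 1)) - b) - (A (x k) - b)
          = θ k • (lam (k + 1) - lam k) := by
        calc (1 + α k) • (A (x (k + 1)) - b) - (A (x k) - b)
            = (A (x (k + 1)) - A (x k)) + α k • (A (x (k + 1)) - b) := by module
          _ = α k • (A (v (k + 1)) - A (x (k + 1))) + α k • (A (x (k + 1)) - b) := by rw [h2]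
          _ = α k • (A (v (k + 1)) - b) := by module
          _ = α k • ((θ k / α k) • (lam (k + 1) - lam k)) := by rw [← hdual k]
          _ = θ k • (lam (k + 1) - lam k) := by
              rw [smul_smul]; congr 1
              field_simp [(hα k).ne']
      have h3 : (1 + α k) • (A (x (k + 1)) - b)
          = θ k • (A (x 0) - b - lam 0 + lam (k + 1)) := by
        calc (1 + α k) • (A (x (k + 1)) - b)
            = ((1 + α k) • (A (x (k + 1)) - b) - (A (x k) - b)) + (A (x k) - b) := by abel
          _ = θ k • (lam (k + 1) - lam k) + θ k • (A (x 0) - b - lam 0 + lam k) := by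
              rw [hv2, ih]
          _ = θ k • (A (x 0) - b - lam 0 + lam (k + 1)) := by module
      have hne : (1 + α k) ≠ 0 := by have := hα k; positivity
      have h4 : θ k = (1 + α k) * θ (k + 1) := by rw [hθ k]; field_simp
      rw [h4, mul_smul] at h3
      exact smul_right_injective _ (by linarith [hα k] : (1 + α k) ≠ 0) h3
  have hquad : ∀ k, 0 ≤ γ k / 2 * ‖v k - xs‖ ^ 2 ∧ 0 ≤ θ k / 2 * ‖lam k - ls‖ ^ 2 := by
    intro k
    constructor
    · have := (hγpos k).le; positivity
    · have := (hθpos k).le; positivity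
  have hGk : ∀ k, 0 ≤ fβ (x k) + ⟪ls, A (x k) - b⟫ - fβ xs := by
    intro k
    have h := hgap (x k) (hxX k)
    have h1 : 0 ≤ β / 2 * ‖A (x k) - b‖ ^ 2 := by positivity
    rw [hfβ (x k), hfβxs]
    linarith
  have hlamb : ∀ k, ‖lam k - ls‖ ≤ Real.sqrt (2 * Ef 0) := by
    intro k
    have h1 : θ k / 2 * ‖lam k - ls‖ ^ 2 ≤ Ef k := by
      rw [hEf k, hLβ, hLβ, hAxs]
      simp only [inner_zero_right, add_zero]
      linarith [hGk k, (hquad k).1]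
    have h2 : ‖lam k - ls‖ ^ 2 ≤ 2 * Ef 0 := by
      nlinarith [h1, hEθ k, hθpos k]
    calc ‖lam k - ls‖ = Real.sqrt (‖lam k - ls‖ ^ 2) := (Real.sqrt_sq (norm_nonneg _)).symm
      _ ≤ Real.sqrt (2 * Ef 0) := Real.sqrt_le_sqrt h2
  have hfeas : ∀ k, ‖A (x k) - b‖ ≤ θ k * R₀ := by
    intro k
    rw [hres k, norm_smul, Real.norm_of_nonneg (hθpos k).le]
    apply mul_le_mul_of_nonneg_left _ (hθpos k).le
    calc ‖A (x 0) - b - lam 0 + lam k‖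
        = ‖(A (x 0) - b) + ((lam k - ls) - (lam 0 - ls))‖ := by congr 1; abel
      _ ≤ ‖A (x 0) - b‖ + ‖(lam k - ls) - (lam 0 - ls)‖ := norm_add_le _ _
      _ ≤ ‖A (x 0) - b‖ + (‖lam k - ls‖ + ‖lam 0 - ls‖) := by
          linarith [norm_sub_le (lam k - ls) (lam 0 - ls)]
      _ ≤ R₀ := by rw [hR₀]; linarith [hlamb k]
  have hgapk : ∀ k, Lag (x k) ls - Lag xs (lam k) = f (x k) - f xs + ⟪ls, A (x k) - b⟫ := by
    intro k
    rw [hLag, hLag, hAxs]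
    simp only [inner_zero_right, add_zero]
    ring
  have hup : ∀ k, Lag (x k) ls - Lag xs (lam k) ≤ θ k * Ef 0 := by
    intro k
    have h1 : fβ (x k) + ⟪ls, A (x k) - b⟫ - fβ xs ≤ Ef k := by
      rw [hEf k, hLβ, hLβ, hAxs]
      simp only [inner_zero_right, add_zero]
      linarith [(hquad k).1, (hquad k).2]
    have h2 : 0 ≤ β / 2 * ‖A (x k) - b‖ ^ 2 := by positivity
    rw [hgapk k]
    rw [hfβ (x k), hfβxs] at h1
    linarith [hEθ k]
  intro k
  have hlow : 0 ≤ Lag (x k) ls - Lag xs (lam k) := by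
    rw [hgapk k]; exact hgap (x k) (hxX k)
  refine ⟨hfeas k, ⟨hlow, hup k⟩, ?_⟩
  have hip : |⟪ls, A (x k) - b⟫| ≤ ‖ls‖ * (θ k * R₀) := by
    calc |⟪ls, A (x k) - b⟫| ≤ ‖ls‖ * ‖A (x k) - b‖ := abs_real_inner_le_norm _ _
      _ ≤ ‖ls‖ * (θ k * R₀) := mul_le_mul_of_nonneg_left (hfeas k) (norm_nonneg _)
  have hθE0 : 0 ≤ θ k * Ef 0 := mul_nonneg (hθpos k).le hE0
  have habs1 := abs_le.mp hip
  have hg1 := hgap (x k) (hxX k)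
  have hg2 := hup k
  rw [hgapk k] at hg2
  rw [abs_le]
  constructor
  · nlinarith [habs1.1, habs1.2]
  · nlinarith [habs1.1, habs1.2]
end
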